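/- In any reserve system, there is no infinite sequence μ₀, μ₁, μ₂, … of eligibility-compliant matchings in which each μ_{k+1} is obtained from μ_k by a swap step at some category; equivalently, iterating swap steps starting from any eligibility-compliant matching terminates after finitely many steps. -/

import Mathlib

open Finset

variable {I C : Type*}

/-- Agent `i` is eligible for category `c` when `i ≻_c ∅`. -/
def Eligible (prio : C → Option I → Option I → Prop) (i : I) (c : C) : Prop :=
  prio c (some i) none

/-- `μ` is a matching: the set of agents assigned to each category `c`
has at most `q c` elements. -/
def IsMatching [Fintype I] [DecidableEq C] (q : C → ℕ) (μ : I → Option C) : Prop :=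
  ∀ c : C, (Finset.univ.filter (fun i => μ i = some c)).card ≤ q c

/-- `μ` is eligibility-compliant: assigned agents are eligible. -/
def Compliant (prio : C → Option I → Option I → Prop) (μ : I → Option C) : Prop :=
  ∀ (i : I) (c : C), μ i = some c → Eligible prio i c

/-- The number of agents matched under `μ`. -/
def matchedCount [Fintype I] (μ : I → Option C) : ℕ :=
  (Finset.univ.filter (fun i => (μ i).isSome)).card

/-- `μ` has maximum cardinality among eligibility-compliant matchings. -/
def MaxCard [Fintype I] [DecidableEq C] (q : C → ℕ)
    (prio : C → Option I → Option I → Prop) (μ : I → Option C) : Prop :=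
  ∀ μ' : I → Option C, IsMatching q μ' → Compliant prio μ' →
    matchedCount μ' ≤ matchedCount μ

/-- Non-wastefulness: an eligible unmatched agent implies the category is full. -/
def NonWasteful [Fintype I] [DecidableEq C] (q : C → ℕ)
    (prio : C → Option I → Option I → Prop) (μ : I → Option C) : Prop :=
  ∀ (i : I) (c : C), Eligible prio i c → μ i = none →
    (Finset.univ.filter (fun j => μ j = some c)).card = q c

/-- Respect for priorities: a matched agent has higher priority (at its
category) than every unmatched agent. -/
def RespectsPriorities (prio : C → Option I → Option I → Prop)
    (μ : I → Option C) : Prop :=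
  ∀ (i i' : I) (c : C), μ i = some c → μ i' = none → prio c (some i) (some i')

/-- `μ'` is obtained from `μ` by a swap step at category `c`: an unmatched
agent `i`, eligible for `c`, replaces the `≻_c`-least agent `i'` currently
assigned to `c`, where `i ≻_c i'`. -/
def SwapStep (prio : C → Option I → Option I → Prop) (c : C)
    (μ μ' : I → Option C) : Prop :=
  ∃ i i' : I,
    μ i = none ∧ Eligible prio i c ∧
    μ i' = some c ∧
    (∀ j : I, μ j = some c → j ≠ i' → prio c (some j) (some i')) ∧
    prio c (some i) (some i') ∧
    μ' i = some c ∧ μ' i' = none ∧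
    (∀ j : I, j ≠ i → j ≠ i' → μ' j = μ j)

/-- One swap step between eligibility-compliant matchings. -/
def SwapRel [Fintype I] [DecidableEq C] (q : C → ℕ)
    (prio : C → Option I → Option I → Prop) (μ μ' : I → Option C) : Prop :=
  IsMatching q μ ∧ Compliant prio μ ∧ IsMatching q μ' ∧ Compliant prio μ' ∧
    ∃ c : C, SwapStep prio c μ μ'

/-- `μ` is terminal: no swap step applies to `μ`. -/
def Terminal (prio : C → Option I → Option I → Prop) (μ : I → Option C) : Prop :=
  ¬ ∃ (i i' : I) (c : C),
      μ i = none ∧ Eligible prio i c ∧ μ i' = some c ∧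
      (∀ j : I, μ j = some c → j ≠ i' → prio c (some j) (some i')) ∧
      prio c (some i) (some i')

/-- The strict part `▷` of the precedence preorder, extended to `C ∪ {∅}`
by `c ▷ ∅` for every category `c`. -/
def StrictPrec (prec : C → C → Prop) : Option C → Option C → Prop
  | some c, some c' => prec c c' ∧ ¬ prec c' c
  | some _, none => True
  | none, _ => False

/-- The number of agents assigned to preferential treatment categories. -/
def benefCount [Fintype I] [DecidableEq C] (Cstar : Finset C)
    (μ : I → Option C) : ℕ :=
  ∑ c ∈ Cstar, (Finset.univ.filter (fun i => μ i = some c)).card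

/-- `μ` is a maximum beneficiary assignment. -/
def MaxBenef [Fintype I] [DecidableEq C] (q : C → ℕ)
    (prio : C → Option I → Option I → Prop) (Cstar : Finset C)
    (μ : I → Option C) : Prop :=
  ∀ μ' : I → Option C, IsMatching q μ' → Compliant prio μ' →
    benefCount Cstar μ' ≤ benefCount Cstar μ

/-- Order preservation by swapping. -/
def OrderPresSwap (prio : C → Option I → Option I → Prop) (prec : C → C → Prop)
    (μ : I → Option C) : Prop :=
  ¬ ∃ (i j : I) (ci cj : C),
      μ i = some ci ∧ μ j = some cj ∧
      StrictPrec prec (some cj) (some ci) ∧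
      prio cj (some i) (some j) ∧
      Eligible prio j ci ∧ Eligible prio i cj

/-- Respect for precedence over categories. -/
def RespectsPrec [Fintype I] [DecidableEq C] (q : C → ℕ)
    (prio : C → Option I → Option I → Prop) (Cstar : Finset C)
    (prec : C → C → Prop) (μ : I → Option C) : Prop :=
  ¬ ∃ (i j : I) (cj : C),
      μ j = some cj ∧
      StrictPrec prec (some cj) (μ i) ∧
      prio cj (some i) (some j) ∧
      ∃ μ' : I → Option C,
        IsMatching q μ' ∧ Compliant prio μ' ∧
        (∀ (k : I) (ck : C), μ k = some ck →
          StrictPrec prec (some ck) (some cj) → μ' k = μ k) ∧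
        (∀ ℓ : I, μ ℓ = some cj → prio cj (some ℓ) (some i) → μ' ℓ = μ ℓ) ∧
        μ' i = some cj ∧
        MaxCard q prio μ' ∧ MaxBenef q prio Cstar μ'

/-- Order preservation for a hybrid sequential reserve system with open
categories `c01` (processed first) and `c02` (processed last). -/
def OrderPresHybrid (prio : C → Option I → Option I → Prop) (Cstar : Finset C)
    (c01 c02 : C) (μ : I → Option C) : Prop :=
  ∀ (i j : I) (cj : C), μ j = some cj → prio cj (some i) (some j) →
    ((∀ ci : C, μ i = some ci → (ci ∈ Cstar ∨ ci = c02) →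
        Eligible prio j ci → cj ≠ c01) ∧
     ((cj ∈ Cstar ∨ cj = c01) → Eligible prio i cj → μ i ≠ some c02))

/-- `P'` is an `i`-improvement of `P`: the orders agree off `i`, and `i`'s
priority weakly increases in every category. -/
def Improves (i : I) (P P' : C → Option I → Option I → Prop) : Prop :=
  ∀ c : C,
    (∀ x y : Option I, x ≠ some i → y ≠ some i → (P' c x y ↔ P c x y)) ∧
    (∀ x : Option I, x ≠ some i → P c (some i) x → P' c (some i) x)

/-- There is no infinite sequence of eligibility-compliant
matchings in which each one is obtained from the previous one by a swap
step at some category. -/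
theorem no_infinite_swap_sequence
    [Fintype I] [Fintype C] [DecidableEq C]
    (q : C → ℕ) (prio : C → Option I → Option I → Prop)
    (hstrict : ∀ c : C, IsStrictTotalOrder (Option I) (prio c)) :
    ¬ ∃ μseq : ℕ → I → Option C,
        (∀ k : ℕ, IsMatching q (μseq k) ∧ Compliant prio (μseq k)) ∧
        (∀ k : ℕ, ∃ c : C, SwapStep prio c (μseq k) (μseq (k + 1))) := by
  classical
  rintro ⟨μseq, _hcomp, hstep⟩
  -- rank of agent i in category c
  set rank : C → I → ℕ := fun c i =>
    (Finset.univ.filter (fun j => prio c (some i) (some j))).card with hrank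
  have hrank_lt : ∀ (c : C) (i i' : I), prio c (some i) (some i') →
      rank c i' < rank c i := by
    intro c i i' h
    haveI := hstrict c
    apply Finset.card_lt_card
    constructor
    · intro j hj
      simp only [Finset.mem_filter, Finset.mem_univ, true_and] at hj ⊢
      exact _root_.trans_of (prio c) h hj
    · intro hsub
      have hi' : i' ∈ Finset.univ.filter (fun j => prio c (some i) (some j)) := by
        simp only [Finset.mem_filter, Finset.mem_univ, true_and]; exact h
      have := hsub hi'
      simp only [Finset.mem_filter, Finset.mem_univ, true_and] at this
      exact _root_.irrefl_of (prio c) _ this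
  have hrank_bd : ∀ (c : C) (i : I), rank c i ≤ Fintype.card I := by
    intro c i
    exact le_trans (Finset.card_filter_le _ _) (le_of_eq (Finset.card_univ))
  -- potential function
  set f : (I → Option C) → I → ℕ := fun μ j =>
    match μ j with
    | none => 0
    | some c => rank c j with hf
  set Φ : (I → Option C) → ℕ := fun μ => ∑ j : I, f μ j with hΦ
  have hΦbd : ∀ μ : I → Option C, Φ μ ≤ Fintype.card I * Fintype.card I := by
    intro μ
    calc Φ μ ≤ ∑ _j : I, Fintype.card I := by
          apply Finset.sum_le_sum
          intro j _
          simp only [hf]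
          cases h : μ j with
          | none => simp
          | some c => exact hrank_bd c j
      _ = Fintype.card I * Fintype.card I := by
          simp [Finset.sum_const, Finset.card_univ, Nat.mul_comm]
  have hmono : ∀ k : ℕ, Φ (μseq k) + 1 ≤ Φ (μseq (k + 1)) := by
    intro k
    obtain ⟨c, i, i', hi_none, _helig, hi'_c, _hleast, hprio, hi_new, hi'_new, hfix⟩ :=
      hstep k
    have hne : i ≠ i' := by
      intro h; rw [h, hi'_c] at hi_none; exact absurd hi_none (by simp)
    set μ := μseq k
    set μ' := μseq (k + 1)
    have hsum : ∀ ν : I → Option C,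
        ∑ j : I, f ν j = f ν i + (f ν i' + ∑ j ∈ (Finset.univ.erase i).erase i', f ν j) := by
      intro ν
      rw [← Finset.add_sum_erase _ _ (Finset.mem_univ i),
          ← Finset.add_sum_erase _ _ (Finset.mem_erase.mpr ⟨Ne.symm hne, Finset.mem_univ i'⟩)]
    have hrest : ∑ j ∈ (Finset.univ.erase i).erase i', f μ' j
        = ∑ j ∈ (Finset.univ.erase i).erase i', f μ j := by
      apply Finset.sum_congr rfl
      intro j hj
      simp only [Finset.mem_erase] at hj
      simp only [hf, hfix j hj.2.1 hj.1]
    have h1 : Φ μ' = rank c i + ∑ j ∈ (Finset.univ.erase i).erase i', f μ j := by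
      have := hsum μ'
      simp only [hΦ]
      rw [this, hrest]
      simp only [hf, hi_new, hi'_new]
      omega
    have h2 : Φ μ = rank c i' + ∑ j ∈ (Finset.univ.erase i).erase i', f μ j := by
      have := hsum μ
      simp only [hΦ]
      rw [this]
      simp only [hf, hi_none, hi'_c]
      omega
    have := hrank_lt c i i' hprio
    omega
  have hlin : ∀ k : ℕ, Φ (μseq 0) + k ≤ Φ (μseq k) := by
    intro k
    induction k with
    | zero => simp
    | succ n ih =>
      have := hmono n
      omega
  have h1 := hlin (Fintype.card I * Fintype.card I + 1)
  have h2 := hΦbd (μseq (Fintype.card I * Fintype.card I + 1))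
  omega
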